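/- Let W be an n×n symmetric entrywise nonnegative real matrix with all row sums strictly positive, D = diag(W 1_n), S = D^{-1/2} W D^{-1/2}, μ > 0, and Y ∈ ℝ^{n×c}. Then (1+μ)I_n − S is invertible, and F* = μ((1+μ)I_n − S)⁻¹ Y is the unique minimizer over F ∈ ℝ^{n×c} of the objective L(F) = trace(Fᵀ(I_n − S)F) + μ‖F − Y‖²_F, where ‖·‖_F is the Frobenius norm. -/

import Mathlib

open Matrix

private lemma trace_sub_quad {n c : ℕ} (B : Matrix (Fin n) (Fin n) ℝ) (hB : Bᵀ = B)
    (P Q : Matrix (Fin n) (Fin c) ℝ) :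
    Matrix.trace ((P - Q)ᵀ * B * (P - Q)) =
      Matrix.trace (Pᵀ * B * P) - 2 * Matrix.trace (Pᵀ * B * Q) + Matrix.trace (Qᵀ * B * Q) := by
  have hQP : Matrix.trace (Qᵀ * B * P) = Matrix.trace (Pᵀ * B * Q) := by
    have h : (Qᵀ * B * P)ᵀ = Pᵀ * B * Q := by
      simp [Matrix.transpose_mul, hB, Matrix.mul_assoc]
    rw [← Matrix.trace_transpose (Qᵀ * B * P), h]
  simp only [Matrix.transpose_sub, Matrix.sub_mul, Matrix.mul_sub, Matrix.trace_sub]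
  rw [hQP]; ring

private lemma trace_quad_eq_sum {n c : ℕ} (A : Matrix (Fin n) (Fin n) ℝ)
    (G : Matrix (Fin n) (Fin c) ℝ) :
    Matrix.trace (Gᵀ * A * G) = ∑ j, (fun i => G i j) ⬝ᵥ (A *ᵥ fun i => G i j) := by
  simp only [Matrix.trace, Matrix.diag_apply, Matrix.mul_apply, Matrix.transpose_apply,
    dotProduct, Matrix.mulVec, Finset.sum_mul, Finset.mul_sum]
  refine Finset.sum_congr rfl fun j _ => ?_
  rw [Finset.sum_comm]
  simp [mul_assoc]

private lemma frob_eq_trace {n c : ℕ} (G : Matrix (Fin n) (Fin c) ℝ) :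
    ∑ i, ∑ j, (G i j) ^ 2 = Matrix.trace (Gᵀ * G) := by
  rw [Finset.sum_comm]
  simp [Matrix.trace, Matrix.diag_apply, Matrix.mul_apply, sq]

/-- Let `W` be an `n × n` symmetric entrywise nonnegative real matrix with
all row sums strictly positive, `D = diag(W 1ₙ)`, `S = D^{-1/2} W D^{-1/2}`, `μ > 0` and
`Y ∈ ℝ^{n×c}`.  Then `(1+μ)Iₙ - S` is invertible, and `F* = μ((1+μ)Iₙ - S)⁻¹ Y` is the
unique minimizer over `F ∈ ℝ^{n×c}` of
`L(F) = trace(Fᵀ(Iₙ - S)F) + μ ‖F - Y‖²_F`. -/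
theorem lgc_closed_form_unique_minimizer
    (n c : ℕ)
    (W : Matrix (Fin n) (Fin n) ℝ)
    (hWsym : Wᵀ = W) (hWnn : ∀ i j, 0 ≤ W i j)
    (hWrow : ∀ i, 0 < ∑ j, W i j)
    (D S : Matrix (Fin n) (Fin n) ℝ)
    (hD : D = Matrix.diagonal (fun i => ∑ j, W i j))
    (hS : S = Matrix.diagonal (fun i => 1 / Real.sqrt (∑ j, W i j)) * W *
              Matrix.diagonal (fun i => 1 / Real.sqrt (∑ j, W i j)))
    (μ : ℝ) (hμ : 0 < μ)
    (Y : Matrix (Fin n) (Fin c) ℝ)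
    (Fstar : Matrix (Fin n) (Fin c) ℝ)
    (hFstar : Fstar = μ • ((1 + μ) • (1 : Matrix (Fin n) (Fin n) ℝ) - S)⁻¹ * Y) :
    IsUnit ((1 + μ) • (1 : Matrix (Fin n) (Fin n) ℝ) - S) ∧
    (∀ F : Matrix (Fin n) (Fin c) ℝ,
      Matrix.trace (Fstarᵀ * (1 - S) * Fstar) + μ * ∑ i, ∑ j, (Fstar i j - Y i j) ^ 2 ≤
      Matrix.trace (Fᵀ * (1 - S) * F) + μ * ∑ i, ∑ j, (F i j - Y i j) ^ 2) ∧
    (∀ F : Matrix (Fin n) (Fin c) ℝ,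
      Matrix.trace (Fᵀ * (1 - S) * F) + μ * ∑ i, ∑ j, (F i j - Y i j) ^ 2 =
      Matrix.trace (Fstarᵀ * (1 - S) * Fstar) + μ * ∑ i, ∑ j, (Fstar i j - Y i j) ^ 2 →
      F = Fstar) := by
  classical
  set d : Fin n → ℝ := fun i => ∑ j, W i j with hd_def
  set δ : Fin n → ℝ := fun i => 1 / Real.sqrt (d i) with hδ_def
  have hdpos : ∀ i, 0 < d i := hWrow
  have hW' : ∀ i j, W j i = W i j := fun i j => congrFun (congrFun hWsym i) j
  -- symmetry of S
  have hSsym : Sᵀ = S := by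
    rw [hS]
    simp [Matrix.transpose_mul, Matrix.diagonal_transpose, hWsym, Matrix.mul_assoc]
  have hSentry : ∀ i j, S i j = δ i * W i j * δ j := by
    intro i j
    rw [hS]
    rw [Matrix.mul_diagonal, Matrix.diagonal_mul]
  -- positive semidefiniteness of 1 - S
  have hδsq : ∀ i, δ i * δ i = 1 / d i := by
    intro i
    simp only [hδ_def]
    rw [div_mul_div_comm, one_mul, Real.mul_self_sqrt (hdpos i).le]
  have quad : ∀ x : Fin n → ℝ, 0 ≤ x ⬝ᵥ ((1 : Matrix (Fin n) (Fin n) ℝ) - S) *ᵥ x := by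
    intro x
    set y : Fin n → ℝ := fun i => δ i * x i with hy
    have hx2 : ∀ i, x i * x i = d i * (y i * y i) := by
      intro i
      have : d i * (y i * y i) = (d i * (δ i * δ i)) * (x i * x i) := by
        simp only [hy]; ring
      rw [this, hδsq i, mul_one_div, div_self (hdpos i).ne', one_mul]
    have hxSx : x ⬝ᵥ S *ᵥ x = ∑ i, ∑ j, W i j * (y i * y j) := by
      simp only [dotProduct, Matrix.mulVec, Finset.mul_sum]
      refine Finset.sum_congr rfl fun i _ => Finset.sum_congr rfl fun j _ => ?_
      rw [hSentry i j]
      simp only [hy]; ring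
    have hxx : x ⬝ᵥ x = ∑ i, d i * (y i * y i) := by
      simp only [dotProduct]
      exact Finset.sum_congr rfl fun i _ => hx2 i
    have h0 : 0 ≤ ∑ i, ∑ j, W i j * (y i - y j) ^ 2 :=
      Finset.sum_nonneg fun i _ => Finset.sum_nonneg fun j _ =>
        mul_nonneg (hWnn i j) (sq_nonneg _)
    have hA1 : ∑ i, ∑ j, W i j * (y i * y i) = ∑ i, d i * (y i * y i) := by
      refine Finset.sum_congr rfl fun i _ => ?_
      rw [← Finset.sum_mul]
    have hA2 : ∑ i, ∑ j, W i j * (y j * y j) = ∑ i, d i * (y i * y i) := by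
      rw [Finset.sum_comm]
      refine Finset.sum_congr rfl fun j _ => ?_
      rw [← Finset.sum_mul]
      congr 1
      exact Finset.sum_congr rfl fun i _ => hW' j i
    have hexp : ∑ i, ∑ j, W i j * (y i - y j) ^ 2 =
        (∑ i, ∑ j, W i j * (y i * y i)) + (∑ i, ∑ j, W i j * (y j * y j))
          - 2 * ∑ i, ∑ j, W i j * (y i * y j) := by
      rw [Finset.mul_sum, ← Finset.sum_add_distrib, ← Finset.sum_sub_distrib]
      refine Finset.sum_congr rfl fun i _ => ?_
      rw [Finset.mul_sum, ← Finset.sum_add_distrib, ← Finset.sum_sub_distrib]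
      refine Finset.sum_congr rfl fun j _ => ?_
      ring
    have hle : ∑ i, ∑ j, W i j * (y i * y j) ≤ ∑ i, d i * (y i * y i) := by
      linarith
    rw [Matrix.sub_mulVec, dotProduct_sub, Matrix.one_mulVec, hxSx, hxx]
    linarith
  have hPSD : ((1 : Matrix (Fin n) (Fin n) ℝ) - S).PosSemidef := by
    refine Matrix.PosSemidef.of_dotProduct_mulVec_nonneg ?_ ?_
    · show (1 - S)ᴴ = 1 - S
      have : ((1 : Matrix (Fin n) (Fin n) ℝ) - S)ᴴ = (1 - S)ᵀ := rfl
      rw [this, Matrix.transpose_sub, Matrix.transpose_one, hSsym]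
    · intro x
      simpa using quad x
  have hμ1 : (μ • (1 : Matrix (Fin n) (Fin n) ℝ)).PosDef := by
    have h1 : μ • (1 : Matrix (Fin n) (Fin n) ℝ) = Matrix.diagonal (fun _ => μ) := by
      ext i j
      by_cases h : i = j <;> simp [Matrix.one_apply, Matrix.diagonal, h]
    rw [h1]
    exact Matrix.PosDef.diagonal fun _ => hμ
  have hAeq : (1 + μ) • (1 : Matrix (Fin n) (Fin n) ℝ) - S
      = ((1 : Matrix (Fin n) (Fin n) ℝ) - S) + μ • 1 := by
    rw [add_smul, one_smul]; abel
  have hPD : ((1 + μ) • (1 : Matrix (Fin n) (Fin n) ℝ) - S).PosDef := by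
    rw [hAeq]
    exact Matrix.PosDef.posSemidef_add hPSD hμ1
  have hUnit : IsUnit ((1 + μ) • (1 : Matrix (Fin n) (Fin n) ℝ) - S) := hPD.isUnit
  set A : Matrix (Fin n) (Fin n) ℝ := (1 + μ) • 1 - S with hA_def
  have hAsym : Aᵀ = A := by
    rw [hA_def, Matrix.transpose_sub, Matrix.transpose_smul, Matrix.transpose_one, hSsym]
  have hAF : A * Fstar = μ • Y := by
    rw [hFstar, ← Matrix.mul_assoc, Matrix.mul_smul,
      Matrix.mul_nonsing_inv _ ((Matrix.isUnit_iff_isUnit_det _).mp hUnit),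
      Matrix.smul_mul, Matrix.one_mul]
  -- quadratic expansion of the loss
  have LF : ∀ F : Matrix (Fin n) (Fin c) ℝ,
      Matrix.trace (Fᵀ * (1 - S) * F) + μ * Matrix.trace ((F - Y)ᵀ * (F - Y))
        = Matrix.trace (Fᵀ * A * F) - 2 * μ * Matrix.trace (Fᵀ * Y)
          + μ * Matrix.trace (Yᵀ * Y) := by
    intro F
    have h1 : Matrix.trace (Fᵀ * A * F)
        = Matrix.trace (Fᵀ * (1 - S) * F) + μ * Matrix.trace (Fᵀ * F) := by
      rw [hAeq]
      rw [Matrix.mul_add, Matrix.add_mul, Matrix.trace_add, Matrix.mul_smul,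
        Matrix.smul_mul, Matrix.mul_one, Matrix.trace_smul, smul_eq_mul]
    have h2 : Matrix.trace ((F - Y)ᵀ * (F - Y))
        = Matrix.trace (Fᵀ * F) - 2 * Matrix.trace (Fᵀ * Y) + Matrix.trace (Yᵀ * Y) := by
      have := trace_sub_quad (1 : Matrix (Fin n) (Fin n) ℝ) (Matrix.transpose_one) F Y
      simpa [Matrix.mul_one] using this
    rw [h2]
    linear_combination -h1
  have trace_mid : ∀ F : Matrix (Fin n) (Fin c) ℝ,
      Matrix.trace (Fᵀ * A * Fstar) = μ * Matrix.trace (Fᵀ * Y) := by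
    intro F
    rw [Matrix.mul_assoc, hAF, Matrix.mul_smul, Matrix.trace_smul, smul_eq_mul]
  have frob : ∀ F : Matrix (Fin n) (Fin c) ℝ,
      ∑ i, ∑ j, (F i j - Y i j) ^ 2 = Matrix.trace ((F - Y)ᵀ * (F - Y)) := by
    intro F
    have := frob_eq_trace (F - Y)
    simpa [Matrix.sub_apply] using this
  have key : ∀ F : Matrix (Fin n) (Fin c) ℝ,
      Matrix.trace (Fᵀ * (1 - S) * F) + μ * ∑ i, ∑ j, (F i j - Y i j) ^ 2
        = Matrix.trace ((F - Fstar)ᵀ * A * (F - Fstar))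
          + (Matrix.trace (Fstarᵀ * (1 - S) * Fstar)
            + μ * ∑ i, ∑ j, (Fstar i j - Y i j) ^ 2) := by
    intro F
    rw [frob F, frob Fstar]
    have e1 := LF F
    have e2 := LF Fstar
    have e3 := trace_sub_quad A hAsym F Fstar
    have e4 := trace_mid F
    have e5 := trace_mid Fstar
    linear_combination e1 - e2 - e3 + 2 * e4 - 2 * e5
  have quad_nonneg : ∀ G : Matrix (Fin n) (Fin c) ℝ,
      0 ≤ Matrix.trace (Gᵀ * A * G) := by
    intro G
    rw [trace_quad_eq_sum]
    refine Finset.sum_nonneg fun j _ => ?_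
    have := hPD.posSemidef.dotProduct_mulVec_nonneg (fun i => G i j)
    simpa using this
  refine ⟨hUnit, ?_, ?_⟩
  · intro F
    have := quad_nonneg (F - Fstar)
    have hk := key F
    linarith
  · intro F hF
    have hk := key F
    have h0 : Matrix.trace ((F - Fstar)ᵀ * A * (F - Fstar)) = 0 := by linarith
    by_contra hne
    have hG : F - Fstar ≠ 0 := sub_ne_zero.mpr hne
    obtain ⟨i0, j0, hij⟩ : ∃ i j, (F - Fstar) i j ≠ 0 := by
      by_contra hall
      push_neg at hall
      exact hG (by ext i j; simpa using hall i j)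
    have hcol : (fun i => (F - Fstar) i j0) ≠ 0 := by
      intro h
      exact hij (congrFun h i0)
    have hpos : 0 < Matrix.trace ((F - Fstar)ᵀ * A * (F - Fstar)) := by
      rw [trace_quad_eq_sum]
      refine Finset.sum_pos' (fun j _ => ?_) ⟨j0, Finset.mem_univ _, ?_⟩
      · have := hPD.posSemidef.dotProduct_mulVec_nonneg (fun i => (F - Fstar) i j)
        simpa using this
      · have := hPD.dotProduct_mulVec_pos (x := fun i => (F - Fstar) i j0) hcol
        simpa using this
    linarith
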